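/- Let A, B, C, τ₁ be real numbers with B ≠ 0, and let ω > 0 satisfy (iω)² + A(iω) + B(iω)e^{−iωτ₁} + C = 0. Then ω⁴ + (A² − B² − 2C)ω² + C² = 0 and cos(ωτ₁) = −A/B. -/

import Mathlib

/-- For the case τ₂ = 0, a purely imaginary root iω of
λ² + Aλ + Bλe^{−λτ₁} + C = 0 satisfies the quartic
ω⁴ + (A²−B²−2C)ω² + C² = 0 and cos(ωτ₁) = −A/B. -/
theorem stmt_17 (A B C τ₁ ω : ℝ) (hB : B ≠ 0) (hω : 0 < ω)
    (heq : (Complex.I * (ω : ℂ)) ^ 2 + (A : ℂ) * (Complex.I * (ω : ℂ)) +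
        (B : ℂ) * (Complex.I * (ω : ℂ)) * Complex.exp (-(Complex.I * (ω : ℂ)) * (τ₁ : ℂ)) +
        (C : ℂ) = 0) :
    ω ^ 4 + (A ^ 2 - B ^ 2 - 2 * C) * ω ^ 2 + C ^ 2 = 0 ∧
    Real.cos (ω * τ₁) = -A / B := by
  set c := Real.cos (ω * τ₁) with hc
  set s := Real.sin (ω * τ₁) with hs
  have h2 : Complex.exp (-(Complex.I * (ω : ℂ)) * (τ₁ : ℂ)) =
      ((c : ℝ) : ℂ) - ((s : ℝ) : ℂ) * Complex.I := by
    have h1 : (-(Complex.I * (ω : ℂ)) * (τ₁ : ℂ)) = ((-(ω * τ₁) : ℝ) : ℂ) * Complex.I := by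
      push_cast; ring
    rw [h1, Complex.exp_mul_I, ← Complex.ofReal_cos, ← Complex.ofReal_sin,
      Real.cos_neg, Real.sin_neg, ← hc, ← hs]
    push_cast; ring
  rw [h2] at heq
  have hre := congrArg Complex.re heq
  have him := congrArg Complex.im heq
  simp [Complex.ext_iff, Complex.add_re, Complex.add_im, Complex.mul_re, Complex.mul_im,
    Complex.cos_ofReal_re, Complex.cos_ofReal_im, Complex.sin_ofReal_re, Complex.sin_ofReal_im,
    pow_two] at hre him
  have hcos : Real.cos (ω * τ₁) = -A / B := by
    field_simp
    nlinarith [him, hω]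
  refine ⟨?_, hcos⟩
  have hsin : B * ω * Real.sin (ω * τ₁) = ω ^ 2 - C := by nlinarith [hre]
  have hA : B * ω * Real.cos (ω * τ₁) = -A * ω := by
    rw [hcos]; field_simp
  have hpy := Real.sin_sq_add_cos_sq (ω * τ₁)
  have h3 : (B * ω * s) ^ 2 + (B * ω * c) ^ 2 = B ^ 2 * ω ^ 2 := by
    have : (B * ω * s) ^ 2 + (B * ω * c) ^ 2 = B ^ 2 * ω ^ 2 * (s ^ 2 + c ^ 2) := by ring
    rw [this, hpy, mul_one]
  rw [hsin, hA] at h3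
  nlinarith [h3]
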